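/- Let p↓ be a decreasing probability distribution on {1,...,n}, and for E with p↓(1) < 1 − E let M_E be the largest m satisfying (E − ∑_{y=m+1}^n p↓(y))/(m−1) < p↓(m). Then M_E is nonincreasing as a function of E: if E' > E (both with p↓(1) < 1 − E'), then M_{E'} ≤ M_E. -/
import Mathlib


open Finset

-- `ME n p E` is the largest `m ∈ {2,…,n}` satisfying
-- `(E − ∑_{y=m+1}^n p(y))/(m−1) < p(m)` (and `0` if no such `m` exists).
open Classical in
noncomputable def ME (n : ℕ) (p : ℕ → ℝ) (E : ℝ) : ℕ :=
  Nat.findGreatest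
    (fun m => 2 ≤ m ∧ (E - ∑ y ∈ Finset.Icc (m + 1) n, p y) / ((m : ℝ) - 1) < p m) n

/-- For a decreasing probability distribution `p` on `{1,…,n}`, the index `M_E` is
nonincreasing in the error parameter `E`: if `E < E'` (both with `p(1) < 1 − E'`),
then `M_{E'} ≤ M_E`. -/
theorem ME_antitone (n : ℕ) (p : ℕ → ℝ)
    (hnn : ∀ y ∈ Finset.Icc 1 n, 0 ≤ p y)
    (hsum : ∑ y ∈ Finset.Icc 1 n, p y = 1)
    (hdec : ∀ y ∈ Finset.Icc 1 n, ∀ z ∈ Finset.Icc 1 n, y ≤ z → p z ≤ p y)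
    (E E' : ℝ) (hE0 : 0 ≤ E) (hEE' : E < E') (hp1' : p 1 < 1 - E') :
    ME n p E' ≤ ME n p E := by
  refine Nat.findGreatest_mono (fun m hm => ?_) le_rfl
  obtain ⟨h2, hlt⟩ := hm
  refine ⟨h2, lt_of_le_of_lt ?_ hlt⟩
  have hm1 : (0:ℝ) < (m:ℝ) - 1 := by
    have : (2:ℝ) ≤ (m:ℝ) := by exact_mod_cast h2
    linarith
  gcongr
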